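/- Let T be the final-size map built from positive parameters βᵢⱼ, γᵢ, μᵢ and initial data S₁₀, S₂₀ > 0, I₁₀, I₂₀ ≥ 0, R₁₀, R₂₀ ≥ 0 with I₁₀ + I₂₀ > 0, and assume hypothesis H2a: βᵢⱼ/μⱼ ≥ 1 for all i,j ∈ {1,2}. Then T has exactly one fixed point S* in [0,S₁₀]×[0,S₂₀], this fixed point satisfies 0 < Sᵢ* < Sᵢ₀ for i = 1,2, and S* = lim_{n→∞} Tⁿ(0,0). -/

import Mathlib

open Filter

lemma prod_combo {g0 g1 g2 h0 h1 h2 l : ℝ} (hl0 : 0 ≤ l) (hl1 : l ≤ 1)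
    (hg0 : 0 ≤ g0) (hh1 : 0 ≤ h1)
    (hgm : g0 ≤ g2) (hhm : h0 ≤ h2)
    (hg : g1 ≤ l*g2 + (1-l)*g0) (hh : h1 ≤ l*h2 + (1-l)*h0) :
    g1*h1 ≤ l*(g2*h2) + (1-l)*(g0*h0) := by
  have h1' : g1*h1 ≤ (l*g2+(1-l)*g0)*(l*h2+(1-l)*h0) :=
    mul_le_mul hg hh hh1 (by nlinarith)
  nlinarith [mul_nonneg (mul_nonneg hl0 (by linarith : (0:ℝ) ≤ 1 - l))
    (mul_nonneg (by linarith : (0:ℝ) ≤ g2 - g0) (by linarith : (0:ℝ) ≤ h2 - h0))]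

lemma comp_mono {S A1 A2 B1 B2 p q : ℝ} (hS : 0 ≤ S) (hA1 : 0 ≤ A1) (hA : A1 ≤ A2)
    (hB1 : 0 ≤ B1) (hB : B1 ≤ B2) (hp : 0 ≤ p) (hq : 0 ≤ q) :
    S * A1 ^ p * B1 ^ q ≤ S * A2 ^ p * B2 ^ q := by
  have e1 := Real.rpow_le_rpow hA1 hA hp
  have e2 := Real.rpow_le_rpow hB1 hB hq
  have n1 := Real.rpow_nonneg hA1 p
  have n2 := Real.rpow_nonneg hB1 q
  have n3 := Real.rpow_nonneg (hA1.trans hA) p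
  calc S * A1 ^ p * B1 ^ q = S * (A1 ^ p * B1 ^ q) := by ring
    _ ≤ S * (A2 ^ p * B2 ^ q) := mul_le_mul_of_nonneg_left (mul_le_mul e1 e2 n2 n3) hS
    _ = S * A2 ^ p * B2 ^ q := by ring

lemma comp_pos {S A B p q : ℝ} (hS : 0 < S) (hA : 0 < A) (hB : 0 < B) :
    0 < S * A ^ p * B ^ q :=
  mul_pos (mul_pos hS (Real.rpow_pos_of_pos hA p)) (Real.rpow_pos_of_pos hB q)

lemma comp_nonneg {S A B p q : ℝ} (hS : 0 ≤ S) (hA : 0 ≤ A) (hB : 0 ≤ B) :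
    0 ≤ S * A ^ p * B ^ q :=
  mul_nonneg (mul_nonneg hS (Real.rpow_nonneg hA p)) (Real.rpow_nonneg hB q)

lemma comp_le_one {S A B p q : ℝ} (hS : 0 ≤ S) (hA0 : 0 ≤ A) (hA : A ≤ 1)
    (hB0 : 0 ≤ B) (hB : B ≤ 1) (hp : 0 ≤ p) (hq : 0 ≤ q) :
    S * A ^ p * B ^ q ≤ S := by
  have e1 := Real.rpow_le_one hA0 hA hp
  have e2 := Real.rpow_le_one hB0 hB hq
  have n1 := Real.rpow_nonneg hA0 p
  have n2 := Real.rpow_nonneg hB0 q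
  calc S * A ^ p * B ^ q = S * (A ^ p * B ^ q) := by ring
    _ ≤ S * 1 := mul_le_mul_of_nonneg_left (mul_le_one₀ e1 n2 e2) hS
    _ = S := mul_one S

lemma comp_lt_one {S A B p q : ℝ} (hS : 0 < S) (hA0 : 0 ≤ A) (hA : A < 1)
    (hB0 : 0 ≤ B) (hB : B ≤ 1) (hp : 0 < p) (hq : 0 ≤ q) :
    S * A ^ p * B ^ q < S := by
  have e1 := Real.rpow_lt_one hA0 hA hp
  have e2 := Real.rpow_le_one hB0 hB hq
  have n1 := Real.rpow_nonneg hA0 p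
  have n2 := Real.rpow_nonneg hB0 q
  have hlt : A ^ p * B ^ q < 1 := by
    calc A ^ p * B ^ q ≤ A ^ p * 1 := mul_le_mul_of_nonneg_left e2 n1
      _ = A ^ p := mul_one _
      _ < 1 := e1
  calc S * A ^ p * B ^ q = S * (A ^ p * B ^ q) := by ring
    _ < S * 1 := mul_lt_mul_of_pos_left hlt hS
    _ = S := mul_one S

lemma comp_lt_one' {S A B p q : ℝ} (hS : 0 < S) (hA0 : 0 ≤ A) (hA : A ≤ 1)
    (hB0 : 0 ≤ B) (hB : B < 1) (hp : 0 ≤ p) (hq : 0 < q) :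
    S * A ^ p * B ^ q < S := by
  have e1 := Real.rpow_le_one hA0 hA hp
  have e2 := Real.rpow_lt_one hB0 hB hq
  have n1 := Real.rpow_nonneg hA0 p
  have n2 := Real.rpow_nonneg hB0 q
  have hlt : A ^ p * B ^ q < 1 := by
    calc A ^ p * B ^ q ≤ 1 * B ^ q := mul_le_mul_of_nonneg_right e1 n2
      _ = B ^ q := one_mul _
      _ < 1 := e2
  calc S * A ^ p * B ^ q = S * (A ^ p * B ^ q) := by ring
    _ < S * 1 := mul_lt_mul_of_pos_left hlt hS
    _ = S := mul_one S

lemma comp_combo {S A0 A1 A2 B0 B1 B2 p q l : ℝ}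
    (hS : 0 ≤ S) (hl0 : 0 ≤ l) (hl1 : l ≤ 1)
    (hA0 : 0 ≤ A0) (hA2 : 0 ≤ A2) (hAm : A0 ≤ A2)
    (hB0 : 0 ≤ B0) (hB2 : 0 ≤ B2) (hBm : B0 ≤ B2)
    (hA1 : A1 = l * A2 + (1-l) * A0) (hB1 : B1 = l * B2 + (1-l) * B0)
    (hp : 1 ≤ p) (hq : 1 ≤ q) :
    S * A1 ^ p * B1 ^ q ≤ l * (S * A2 ^ p * B2 ^ q) + (1-l) * (S * A0 ^ p * B0 ^ q) := by
  have hg : A1 ^ p ≤ l * A2 ^ p + (1-l) * A0 ^ p := by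
    have := (convexOn_rpow hp).2 (Set.mem_Ici.2 hA2) (Set.mem_Ici.2 hA0) hl0
      (by linarith : (0:ℝ) ≤ 1 - l) (by ring)
    rw [hA1]
    simpa [smul_eq_mul] using this
  have hh : B1 ^ q ≤ l * B2 ^ q + (1-l) * B0 ^ q := by
    have := (convexOn_rpow hq).2 (Set.mem_Ici.2 hB2) (Set.mem_Ici.2 hB0) hl0
      (by linarith : (0:ℝ) ≤ 1 - l) (by ring)
    rw [hB1]
    simpa [smul_eq_mul] using this
  have hB1n : 0 ≤ B1 ^ q := by
    rw [hB1]
    exact Real.rpow_nonneg (by nlinarith) q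
  have key := prod_combo hl0 hl1 (Real.rpow_nonneg hA0 p) hB1n
    (Real.rpow_le_rpow hA0 hAm (by linarith)) (Real.rpow_le_rpow hB0 hBm (by linarith))
    hg hh
  have := mul_le_mul_of_nonneg_left key hS
  nlinarith [this]


noncomputable def Tmap (β11 β12 β21 β22 μ1 μ2 S10 S20 ε1 ε2 Z1 Z2 N10 N20 : ℝ) :
    ℝ × ℝ → ℝ × ℝ := fun X =>
  (S10 * ((ε1 * X.1 + Z1) / N10) ^ (β11 / μ1) * ((ε2 * X.2 + Z2) / N20) ^ (β12 / μ2),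
   S20 * ((ε1 * X.1 + Z1) / N10) ^ (β21 / μ1) * ((ε2 * X.2 + Z2) / N20) ^ (β22 / μ2))

lemma Tmap_contAt (β11 β12 β21 β22 μ1 μ2 S10 S20 ε1 ε2 Z1 Z2 N10 N20 : ℝ) (X : ℝ × ℝ)
    (h1 : (ε1 * X.1 + Z1) / N10 ≠ 0) (h2 : (ε2 * X.2 + Z2) / N20 ≠ 0) :
    ContinuousAt (Tmap β11 β12 β21 β22 μ1 μ2 S10 S20 ε1 ε2 Z1 Z2 N10 N20) X := by
  have c1 : ContinuousAt (fun Y : ℝ × ℝ => (ε1 * Y.1 + Z1) / N10) X := by fun_prop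
  have c2 : ContinuousAt (fun Y : ℝ × ℝ => (ε2 * Y.2 + Z2) / N20) X := by fun_prop
  exact ContinuousAt.prodMk
    ((continuousAt_const.mul (c1.rpow_const (Or.inl h1))).mul (c2.rpow_const (Or.inl h2)))
    ((continuousAt_const.mul (c1.rpow_const (Or.inl h1))).mul (c2.rpow_const (Or.inl h2)))
set_option maxHeartbeats 1000000 in
theorem stmt_12
    (β11 β12 β21 β22 γ1 γ2 μ1 μ2 : ℝ)
    (hβ11 : 0 < β11) (hβ12 : 0 < β12) (hβ21 : 0 < β21) (hβ22 : 0 < β22)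
    (hγ1 : 0 < γ1) (hγ2 : 0 < γ2) (hμ1 : 0 < μ1) (hμ2 : 0 < μ2)
    (S10 S20 I10 I20 R10 R20 : ℝ)
    (hS10 : 0 < S10) (hS20 : 0 < S20)
    (hI10 : 0 ≤ I10) (hI20 : 0 ≤ I20)
    (hR10 : 0 ≤ R10) (hR20 : 0 ≤ R20)
    (ε1 ε2 Z1 Z2 N10 N20 : ℝ)
    (hN10 : N10 = S10 + I10 + R10) (hN20 : N20 = S20 + I20 + R20)
    (hε1 : ε1 = μ1 / (γ1 + μ1)) (hε2 : ε2 = μ2 / (γ2 + μ2))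
    (hZ1 : Z1 = (1 - ε1) * N10 + ε1 * R10) (hZ2 : Z2 = (1 - ε2) * N20 + ε2 * R20)
    (hI0 : 0 < I10 + I20)
    (hH2a11 : 1 ≤ β11 / μ1) (hH2a12 : 1 ≤ β12 / μ2)
    (hH2a21 : 1 ≤ β21 / μ1) (hH2a22 : 1 ≤ β22 / μ2)
    (T : ℝ × ℝ → ℝ × ℝ)
    (hT : T = Tmap β11 β12 β21 β22 μ1 μ2 S10 S20 ε1 ε2 Z1 Z2 N10 N20)
    :
    ∃ Sstar : ℝ × ℝ,
      (T Sstar = Sstar ∧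
       (0 < Sstar.1 ∧ Sstar.1 < S10) ∧ (0 < Sstar.2 ∧ Sstar.2 < S20) ∧
       Tendsto (fun n => T^[n] (0, 0)) atTop (nhds Sstar)) ∧
      ∀ Y : ℝ × ℝ, Y.1 ∈ Set.Icc (0:ℝ) S10 → Y.2 ∈ Set.Icc (0:ℝ) S20 → T Y = Y → Y = Sstar := by
  set P11 := β11 / μ1 with hP11
  set P12 := β12 / μ2 with hP12
  set P21 := β21 / μ1 with hP21
  set P22 := β22 / μ2 with hP22
  have hTdef : ∀ X : ℝ × ℝ, T X =
      (S10 * ((ε1 * X.1 + Z1) / N10) ^ P11 * ((ε2 * X.2 + Z2) / N20) ^ P12,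
       S20 * ((ε1 * X.1 + Z1) / N10) ^ P21 * ((ε2 * X.2 + Z2) / N20) ^ P22) := by
    intro X; rw [hT]; rfl
  have hN1 : 0 < N10 := by rw [hN10]; linarith
  have hN2 : 0 < N20 := by rw [hN20]; linarith
  have hε1pos : 0 < ε1 := by rw [hε1]; positivity
  have hε1lt : ε1 < 1 := by rw [hε1, div_lt_one (by linarith)]; linarith
  have hε2pos : 0 < ε2 := by rw [hε2]; positivity
  have hε2lt : ε2 < 1 := by rw [hε2, div_lt_one (by linarith)]; linarith
  have hZ1pos : 0 < Z1 := by
    rw [hZ1]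
    have := mul_pos (by linarith : (0:ℝ) < 1 - ε1) hN1
    have := mul_nonneg hε1pos.le hR10
    linarith
  have hZ2pos : 0 < Z2 := by
    rw [hZ2]
    have := mul_pos (by linarith : (0:ℝ) < 1 - ε2) hN2
    have := mul_nonneg hε2pos.le hR20
    linarith
  have hK1 : ε1 * S10 + Z1 = N10 - ε1 * I10 := by rw [hZ1, hN10]; ring
  have hK2 : ε2 * S20 + Z2 = N20 - ε2 * I20 := by rw [hZ2, hN20]; ring
  have hB1pos : ∀ x : ℝ, 0 ≤ x → 0 < (ε1 * x + Z1) / N10 := by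
    intro x hx; apply div_pos _ hN1; have := mul_nonneg hε1pos.le hx; linarith
  have hB2pos : ∀ x : ℝ, 0 ≤ x → 0 < (ε2 * x + Z2) / N20 := by
    intro x hx; apply div_pos _ hN2; have := mul_nonneg hε2pos.le hx; linarith
  have hB1le : ∀ x : ℝ, x ≤ S10 → (ε1 * x + Z1) / N10 ≤ 1 := by
    intro x hx; rw [div_le_one hN1]
    have := mul_le_mul_of_nonneg_left hx hε1pos.le
    have := mul_nonneg hε1pos.le hI10
    linarith
  have hB2le : ∀ x : ℝ, x ≤ S20 → (ε2 * x + Z2) / N20 ≤ 1 := by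
    intro x hx; rw [div_le_one hN2]
    have := mul_le_mul_of_nonneg_left hx hε2pos.le
    have := mul_nonneg hε2pos.le hI20
    linarith
  have hB1mono : ∀ x y : ℝ, x ≤ y → (ε1 * x + Z1) / N10 ≤ (ε1 * y + Z1) / N10 := by
    intro x y hxy
    rw [div_le_div_iff_of_pos_right hN1]
    have := mul_le_mul_of_nonneg_left hxy hε1pos.le
    linarith
  have hB2mono : ∀ x y : ℝ, x ≤ y → (ε2 * x + Z2) / N20 ≤ (ε2 * y + Z2) / N20 := by
    intro x y hxy
    rw [div_le_div_iff_of_pos_right hN2]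
    have := mul_le_mul_of_nonneg_left hxy hε2pos.le
    linarith
  have hP11_1 : (1:ℝ) ≤ P11 := hH2a11
  have hP12_1 : (1:ℝ) ≤ P12 := hH2a12
  have hP21_1 : (1:ℝ) ≤ P21 := hH2a21
  have hP22_1 : (1:ℝ) ≤ P22 := hH2a22
  -- monotonicity of T
  have hmono : ∀ X Y : ℝ × ℝ, 0 ≤ X.1 → 0 ≤ X.2 → X.1 ≤ Y.1 → X.2 ≤ Y.2 →
      (T X).1 ≤ (T Y).1 ∧ (T X).2 ≤ (T Y).2 := by
    intro X Y hX1 hX2 h1 h2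
    rw [hTdef X, hTdef Y]
    exact ⟨comp_mono hS10.le (hB1pos _ hX1).le (hB1mono _ _ h1) (hB2pos _ hX2).le
        (hB2mono _ _ h2) (by linarith) (by linarith),
      comp_mono hS20.le (hB1pos _ hX1).le (hB1mono _ _ h1) (hB2pos _ hX2).le
        (hB2mono _ _ h2) (by linarith) (by linarith)⟩
  -- T maps the box into the box
  have hboxT : ∀ X : ℝ × ℝ, 0 ≤ X.1 → X.1 ≤ S10 → 0 ≤ X.2 → X.2 ≤ S20 →
      0 ≤ (T X).1 ∧ (T X).1 ≤ S10 ∧ 0 ≤ (T X).2 ∧ (T X).2 ≤ S20 := by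
    intro X h1 h2 h3 h4
    rw [hTdef X]
    refine ⟨comp_nonneg hS10.le (hB1pos _ h1).le (hB2pos _ h3).le, ?_,
      comp_nonneg hS20.le (hB1pos _ h1).le (hB2pos _ h3).le, ?_⟩
    · exact comp_le_one hS10.le (hB1pos _ h1).le (hB1le _ h2) (hB2pos _ h3).le
        (hB2le _ h4) (by linarith) (by linarith)
    · exact comp_le_one hS20.le (hB1pos _ h1).le (hB1le _ h2) (hB2pos _ h3).le
        (hB2le _ h4) (by linarith) (by linarith)
  -- T at the top corner is strictly below the corner
  have hTop : (T (S10, S20)).1 < S10 ∧ (T (S10, S20)).2 < S20 := by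
    rw [hTdef]
    dsimp only
    rcases lt_or_ge 0 I10 with hI | hI
    · have hA1 : (ε1 * S10 + Z1) / N10 < 1 := by
        rw [div_lt_one hN1]
        have := mul_pos hε1pos hI
        linarith
      exact ⟨comp_lt_one hS10 (hB1pos _ hS10.le).le hA1 (hB2pos _ hS20.le).le
          (hB2le _ le_rfl) (by linarith) (by linarith),
        comp_lt_one hS20 (hB1pos _ hS10.le).le hA1 (hB2pos _ hS20.le).le
          (hB2le _ le_rfl) (by linarith) (by linarith)⟩
    · have hI2 : 0 < I20 := by linarith
      have hA2 : (ε2 * S20 + Z2) / N20 < 1 := by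
        rw [div_lt_one hN2]
        have := mul_pos hε2pos hI2
        linarith
      exact ⟨comp_lt_one' hS10 (hB1pos _ hS10.le).le (hB1le _ le_rfl)
          (hB2pos _ hS20.le).le hA2 (by linarith) (by linarith),
        comp_lt_one' hS20 (hB1pos _ hS10.le).le (hB1le _ le_rfl)
          (hB2pos _ hS20.le).le hA2 (by linarith) (by linarith)⟩
  -- continuity
  have hcont : ∀ X : ℝ × ℝ, 0 ≤ X.1 → 0 ≤ X.2 → ContinuousAt T X := by
    intro X h1 h2
    rw [hT]
    exact Tmap_contAt _ _ _ _ _ _ _ _ _ _ _ _ _ _ X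
      (ne_of_gt (hB1pos _ h1)) (ne_of_gt (hB2pos _ h2))
  -- the increasing sequence from the origin
  set a : ℕ → ℝ × ℝ := fun n => T^[n] (0, 0) with ha
  have haS : ∀ n, a (n+1) = T (a n) := fun n => Function.iterate_succ_apply' T n (0, 0)
  have habox : ∀ n, 0 ≤ (a n).1 ∧ (a n).1 ≤ S10 ∧ 0 ≤ (a n).2 ∧ (a n).2 ≤ S20 := by
    intro n; induction n with
    | zero => exact ⟨le_rfl, hS10.le, le_rfl, hS20.le⟩
    | succ n ih => rw [haS]; exact hboxT _ ih.1 ih.2.1 ih.2.2.1 ih.2.2.2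
  have hamono : ∀ n, (a n).1 ≤ (a (n+1)).1 ∧ (a n).2 ≤ (a (n+1)).2 := by
    intro n; induction n with
    | zero => exact ⟨(habox 1).1, (habox 1).2.2.1⟩
    | succ n ih =>
      have h := hmono (a n) (a (n+1)) (habox n).1 (habox n).2.2.1 ih.1 ih.2
      rw [← haS n, ← haS (n+1)] at h
      exact h
  have hmono1 : Monotone (fun n => (a n).1) := monotone_nat_of_le_succ (fun n => (hamono n).1)
  have hmono2 : Monotone (fun n => (a n).2) := monotone_nat_of_le_succ (fun n => (hamono n).2)
  have hbdd1 : BddAbove (Set.range fun n => (a n).1) :=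
    ⟨S10, by rintro x ⟨n, rfl⟩; exact (habox n).2.1⟩
  have hbdd2 : BddAbove (Set.range fun n => (a n).2) :=
    ⟨S20, by rintro x ⟨n, rfl⟩; exact (habox n).2.2.2⟩
  set L1 := ⨆ n, (a n).1 with hL1def
  set L2 := ⨆ n, (a n).2 with hL2def
  have hL1t : Tendsto (fun n => (a n).1) atTop (nhds L1) := tendsto_atTop_ciSup hmono1 hbdd1
  have hL2t : Tendsto (fun n => (a n).2) atTop (nhds L2) := tendsto_atTop_ciSup hmono2 hbdd2
  have htend : Tendsto a atTop (nhds (L1, L2)) := hL1t.prodMk_nhds hL2t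
  have hL1box : 0 ≤ L1 ∧ L1 ≤ S10 := ⟨le_ciSup hbdd1 0, ciSup_le fun n => (habox n).2.1⟩
  have hL2box : 0 ≤ L2 ∧ L2 ≤ S20 := ⟨le_ciSup hbdd2 0, ciSup_le fun n => (habox n).2.2.2⟩
  have hfixL : T (L1, L2) = (L1, L2) := by
    have h1 : Tendsto (fun n => a (n+1)) atTop (nhds (L1, L2)) :=
      htend.comp (tendsto_add_atTop_nat 1)
    have h2 : Tendsto (fun n => T (a n)) atTop (nhds (T (L1, L2))) :=
      (hcont (L1, L2) hL1box.1 hL2box.1).tendsto.comp htend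
    have h3 : (fun n => a (n+1)) = fun n => T (a n) := funext haS
    rw [h3] at h1
    exact tendsto_nhds_unique h2 h1
  -- positivity of the limit from below
  have hstep1pos : 0 < (T (0, 0)).1 := by
    rw [hTdef]
    exact comp_pos hS10 (hB1pos 0 le_rfl) (hB2pos 0 le_rfl)
  have hstep2pos : 0 < (T (0, 0)).2 := by
    rw [hTdef]
    exact comp_pos hS20 (hB1pos 0 le_rfl) (hB2pos 0 le_rfl)
  have ha1 : a 1 = T (0, 0) := haS 0
  have hL1pos : 0 < L1 := by
    have h := le_ciSup hbdd1 1
    rw [ha1] at h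
    exact lt_of_lt_of_le hstep1pos h
  have hL2pos : 0 < L2 := by
    have h := le_ciSup hbdd2 1
    rw [ha1] at h
    exact lt_of_lt_of_le hstep2pos h
  have hLlt : L1 < S10 ∧ L2 < S20 := by
    have h := hmono (L1, L2) (S10, S20) hL1box.1 hL2box.1 hL1box.2 hL2box.2
    rw [hfixL] at h
    exact ⟨lt_of_le_of_lt h.1 hTop.1, lt_of_le_of_lt h.2 hTop.2⟩
  -- the decreasing sequence from the top corner
  set b : ℕ → ℝ × ℝ := fun n => T^[n] (S10, S20) with hb
  have hbS : ∀ n, b (n+1) = T (b n) := fun n => Function.iterate_succ_apply' T n (S10, S20)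
  have hbbox : ∀ n, 0 ≤ (b n).1 ∧ (b n).1 ≤ S10 ∧ 0 ≤ (b n).2 ∧ (b n).2 ≤ S20 := by
    intro n; induction n with
    | zero => exact ⟨hS10.le, le_rfl, hS20.le, le_rfl⟩
    | succ n ih => rw [hbS]; exact hboxT _ ih.1 ih.2.1 ih.2.2.1 ih.2.2.2
  have hbanti : ∀ n, (b (n+1)).1 ≤ (b n).1 ∧ (b (n+1)).2 ≤ (b n).2 := by
    intro n; induction n with
    | zero => exact ⟨hTop.1.le, hTop.2.le⟩
    | succ n ih =>
      have h := hmono (b (n+1)) (b n) (hbbox (n+1)).1 (hbbox (n+1)).2.2.1 ih.1 ih.2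
      rw [← hbS n, ← hbS (n+1)] at h
      exact h
  have hanti1 : Antitone (fun n => (b n).1) := antitone_nat_of_succ_le (fun n => (hbanti n).1)
  have hanti2 : Antitone (fun n => (b n).2) := antitone_nat_of_succ_le (fun n => (hbanti n).2)
  have hbdb1 : BddBelow (Set.range fun n => (b n).1) :=
    ⟨0, by rintro x ⟨n, rfl⟩; exact (hbbox n).1⟩
  have hbdb2 : BddBelow (Set.range fun n => (b n).2) :=
    ⟨0, by rintro x ⟨n, rfl⟩; exact (hbbox n).2.2.1⟩
  set M1 := ⨅ n, (b n).1 with hM1def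
  set M2 := ⨅ n, (b n).2 with hM2def
  have hM1t : Tendsto (fun n => (b n).1) atTop (nhds M1) := tendsto_atTop_ciInf hanti1 hbdb1
  have hM2t : Tendsto (fun n => (b n).2) atTop (nhds M2) := tendsto_atTop_ciInf hanti2 hbdb2
  have hbtend : Tendsto b atTop (nhds (M1, M2)) := hM1t.prodMk_nhds hM2t
  have hM1box : 0 ≤ M1 ∧ M1 ≤ S10 := ⟨le_ciInf fun n => (hbbox n).1, ciInf_le hbdb1 0⟩
  have hM2box : 0 ≤ M2 ∧ M2 ≤ S20 := ⟨le_ciInf fun n => (hbbox n).2.2.1, ciInf_le hbdb2 0⟩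
  have hfixM : T (M1, M2) = (M1, M2) := by
    have h1 : Tendsto (fun n => b (n+1)) atTop (nhds (M1, M2)) :=
      hbtend.comp (tendsto_add_atTop_nat 1)
    have h2 : Tendsto (fun n => T (b n)) atTop (nhds (T (M1, M2))) :=
      (hcont (M1, M2) hM1box.1 hM2box.1).tendsto.comp hbtend
    have h3 : (fun n => b (n+1)) = fun n => T (b n) := funext hbS
    rw [h3] at h1
    exact tendsto_nhds_unique h2 h1
  have hMlt : M1 < S10 ∧ M2 < S20 := by
    have h := hmono (M1, M2) (S10, S20) hM1box.1 hM2box.1 hM1box.2 hM2box.2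
    rw [hfixM] at h
    exact ⟨lt_of_le_of_lt h.1 hTop.1, lt_of_le_of_lt h.2 hTop.2⟩
  -- any fixed point Y in the box satisfies (L1,L2) ≤ Y ≤ (M1,M2)
  have hsandwich : ∀ Y : ℝ × ℝ, 0 ≤ Y.1 → Y.1 ≤ S10 → 0 ≤ Y.2 → Y.2 ≤ S20 → T Y = Y →
      (L1 ≤ Y.1 ∧ L2 ≤ Y.2) ∧ (Y.1 ≤ M1 ∧ Y.2 ≤ M2) := by
    intro Y h1 h2 h3 h4 hfix
    have hlow : ∀ n, (a n).1 ≤ Y.1 ∧ (a n).2 ≤ Y.2 := by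
      intro n; induction n with
      | zero => exact ⟨h1, h3⟩
      | succ n ih =>
        have h := hmono (a n) Y (habox n).1 (habox n).2.2.1 ih.1 ih.2
        rw [hfix, ← haS n] at h
        exact h
    have hhigh : ∀ n, Y.1 ≤ (b n).1 ∧ Y.2 ≤ (b n).2 := by
      intro n; induction n with
      | zero => exact ⟨h2, h4⟩
      | succ n ih =>
        have h := hmono Y (b n) h1 h3 ih.1 ih.2
        rw [hfix, ← hbS n] at h
        exact h
    exact ⟨⟨ciSup_le fun n => (hlow n).1, ciSup_le fun n => (hlow n).2⟩,
      ⟨le_ciInf fun n => (hhigh n).1, le_ciInf fun n => (hhigh n).2⟩⟩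
  -- L ≤ M
  have hLM := (hsandwich (L1, L2) hL1box.1 hL1box.2 hL2box.1 hL2box.2 hfixL).2
  have hd1 : 0 ≤ M1 - L1 := by linarith [hLM.1]
  have hd2 : 0 ≤ M2 - L2 := by linarith [hLM.2]
  -- the convexity argument: M = L
  have hML : M1 = L1 ∧ M2 = L2 := by
    obtain ⟨d1, hd1def⟩ : ∃ x : ℝ, x = M1 - L1 := ⟨_, rfl⟩
    obtain ⟨d2, hd2def⟩ : ∃ x : ℝ, x = M2 - L2 := ⟨_, rfl⟩
    have hd1n : 0 ≤ d1 := by rw [hd1def]; linarith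
    have hd2n : 0 ≤ d2 := by rw [hd2def]; linarith
    obtain ⟨s, hsdef⟩ : ∃ x : ℝ, x = min ((S10 - M1) / (d1 + 1)) ((S20 - M2) / (d2 + 1)) :=
      ⟨_, rfl⟩
    have hspos : 0 < s := by
      rw [hsdef]
      apply lt_min
      · exact div_pos (by linarith [hMlt.1]) (by linarith)
      · exact div_pos (by linarith [hMlt.2]) (by linarith)
    obtain ⟨v1, hv1def⟩ : ∃ x : ℝ, x = M1 + s * d1 := ⟨_, rfl⟩
    obtain ⟨v2, hv2def⟩ : ∃ x : ℝ, x = M2 + s * d2 := ⟨_, rfl⟩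
    have hsd1 : s * d1 ≤ S10 - M1 := by
      have h1 : s ≤ (S10 - M1) / (d1 + 1) := by rw [hsdef]; exact min_le_left _ _
      have h2 : s * d1 ≤ (S10 - M1) / (d1 + 1) * d1 := mul_le_mul_of_nonneg_right h1 hd1n
      have h3 : (S10 - M1) / (d1 + 1) * d1 ≤ S10 - M1 := by
        rw [div_mul_eq_mul_div, div_le_iff₀ (by linarith)]
        have := mul_le_mul_of_nonneg_left (by linarith : d1 ≤ d1 + 1)
          (by linarith [hMlt.1] : 0 ≤ S10 - M1)
        linarith
      exact h2.trans h3
    have hsd2 : s * d2 ≤ S20 - M2 := by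
      have h1 : s ≤ (S20 - M2) / (d2 + 1) := by rw [hsdef]; exact min_le_right _ _
      have h2 : s * d2 ≤ (S20 - M2) / (d2 + 1) * d2 := mul_le_mul_of_nonneg_right h1 hd2n
      have h3 : (S20 - M2) / (d2 + 1) * d2 ≤ S20 - M2 := by
        rw [div_mul_eq_mul_div, div_le_iff₀ (by linarith)]
        have := mul_le_mul_of_nonneg_left (by linarith : d2 ≤ d2 + 1)
          (by linarith [hMlt.2] : 0 ≤ S20 - M2)
        linarith
      exact h2.trans h3
    have hsd1n : 0 ≤ s * d1 := mul_nonneg hspos.le hd1n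
    have hsd2n : 0 ≤ s * d2 := mul_nonneg hspos.le hd2n
    have hv1n : 0 ≤ v1 := by rw [hv1def]; linarith [hM1box.1]
    have hv2n : 0 ≤ v2 := by rw [hv2def]; linarith [hM2box.1]
    have hv1le : v1 ≤ S10 := by rw [hv1def]; linarith
    have hv2le : v2 ≤ S20 := by rw [hv2def]; linarith
    obtain ⟨l, hldef⟩ : ∃ x : ℝ, x = 1 / (1 + s) := ⟨_, rfl⟩
    have h1s : (1:ℝ) + s ≠ 0 := by positivity
    have hlpos : 0 < l := by rw [hldef]; positivity
    have hl1 : l ≤ 1 := by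
      rw [hldef, div_le_one (by linarith)]
      linarith
    have hmid1 : M1 = l * v1 + (1 - l) * L1 := by
      rw [hv1def, hldef, hd1def]
      field_simp
      ring
    have hmid2 : M2 = l * v2 + (1 - l) * L2 := by
      rw [hv2def, hldef, hd2def]
      field_simp
      ring
    have hA1eq : (ε1 * M1 + Z1) / N10 =
        l * ((ε1 * v1 + Z1) / N10) + (1 - l) * ((ε1 * L1 + Z1) / N10) := by
      rw [hmid1]
      field_simp
      ring
    have hB1eq : (ε2 * M2 + Z2) / N20 =
        l * ((ε2 * v2 + Z2) / N20) + (1 - l) * ((ε2 * L2 + Z2) / N20) := by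
      rw [hmid2]
      field_simp
      ring
    have hL1v : L1 ≤ v1 := by rw [hv1def]; linarith [hLM.1]
    have hL2v : L2 ≤ v2 := by rw [hv2def]; linarith [hLM.2]
    -- v ≤ T v
    have hcomb1 := comp_combo (S := S10) (p := P11) (q := P12)
      hS10.le hlpos.le hl1
      (hB1pos _ hL1box.1).le (hB1pos _ hv1n).le (hB1mono _ _ hL1v)
      (hB2pos _ hL2box.1).le (hB2pos _ hv2n).le (hB2mono _ _ hL2v)
      hA1eq hB1eq hP11_1 hP12_1
    have hcomb2 := comp_combo (S := S20) (p := P21) (q := P22)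
      hS20.le hlpos.le hl1
      (hB1pos _ hL1box.1).le (hB1pos _ hv1n).le (hB1mono _ _ hL1v)
      (hB2pos _ hL2box.1).le (hB2pos _ hv2n).le (hB2mono _ _ hL2v)
      hA1eq hB1eq hP21_1 hP22_1
    have eM1 : S10 * ((ε1 * M1 + Z1) / N10) ^ P11 * ((ε2 * M2 + Z2) / N20) ^ P12 = M1 := by
      have h := hTdef (M1, M2)
      rw [hfixM] at h
      exact (congrArg Prod.fst h).symm
    have eM2 : S20 * ((ε1 * M1 + Z1) / N10) ^ P21 * ((ε2 * M2 + Z2) / N20) ^ P22 = M2 := by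
      have h := hTdef (M1, M2)
      rw [hfixM] at h
      exact (congrArg Prod.snd h).symm
    have eL1 : S10 * ((ε1 * L1 + Z1) / N10) ^ P11 * ((ε2 * L2 + Z2) / N20) ^ P12 = L1 := by
      have h := hTdef (L1, L2)
      rw [hfixL] at h
      exact (congrArg Prod.fst h).symm
    have eL2 : S20 * ((ε1 * L1 + Z1) / N10) ^ P21 * ((ε2 * L2 + Z2) / N20) ^ P22 = L2 := by
      have h := hTdef (L1, L2)
      rw [hfixL] at h
      exact (congrArg Prod.snd h).symm
    have eV1 : (T (v1, v2)).1 =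
        S10 * ((ε1 * v1 + Z1) / N10) ^ P11 * ((ε2 * v2 + Z2) / N20) ^ P12 := by
      rw [hTdef]
    have eV2 : (T (v1, v2)).2 =
        S20 * ((ε1 * v1 + Z1) / N10) ^ P21 * ((ε2 * v2 + Z2) / N20) ^ P22 := by
      rw [hTdef]
    rw [eM1, eL1, ← eV1] at hcomb1
    rw [eM2, eL2, ← eV2] at hcomb2
    have hTv1 : v1 ≤ (T (v1, v2)).1 := by
      have hlv : l * v1 ≤ l * (T (v1, v2)).1 := by linarith [hmid1]
      exact (mul_le_mul_iff_right₀ hlpos).mp hlv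
    have hTv2 : v2 ≤ (T (v1, v2)).2 := by
      have hlv : l * v2 ≤ l * (T (v1, v2)).2 := by linarith [hmid2]
      exact (mul_le_mul_iff_right₀ hlpos).mp hlv
    -- v is below every b n, hence below M; conclude d = 0
    have hvb : ∀ n, v1 ≤ (b n).1 ∧ v2 ≤ (b n).2 := by
      intro n; induction n with
      | zero => exact ⟨hv1le, hv2le⟩
      | succ n ih =>
        have h := hmono (v1, v2) (b n) hv1n hv2n ih.1 ih.2
        rw [← hbS n] at h
        exact ⟨hTv1.trans h.1, hTv2.trans h.2⟩
    have hvM1 : v1 ≤ M1 := le_ciInf fun n => (hvb n).1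
    have hvM2 : v2 ≤ M2 := le_ciInf fun n => (hvb n).2
    have hd1z : d1 ≤ 0 := by
      by_contra hc
      push_neg at hc
      have := mul_pos hspos hc
      rw [hv1def] at hvM1
      linarith
    have hd2z : d2 ≤ 0 := by
      by_contra hc
      push_neg at hc
      have := mul_pos hspos hc
      rw [hv2def] at hvM2
      linarith
    constructor
    · rw [hd1def] at hd1z hd1n; linarith
    · rw [hd2def] at hd2z hd2n; linarith
  -- conclude
  refine ⟨(L1, L2), ⟨hfixL, ⟨hL1pos, hLlt.1⟩, ⟨hL2pos, hLlt.2⟩, htend⟩, ?_⟩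
  intro Y hY1 hY2 hYfix
  have hs := hsandwich Y hY1.1 hY1.2 hY2.1 hY2.2 hYfix
  have e1 : Y.1 = L1 := le_antisymm (by linarith [hs.2.1, hML.1]) hs.1.1
  have e2 : Y.2 = L2 := le_antisymm (by linarith [hs.2.2, hML.2]) hs.1.2
  exact Prod.ext e1 e2
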